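/- The function Ψ_f is a well-defined vector-valued holomorphic function on ℂ^k (independent of the choice of admissible radius R), and if P_s has k pairwise distinct roots z_1,…,z_k, then its h-th component satisfies ψ_h(s) = Σ_{j=1}^{k} z_j^h f(z_j) for every h ∈ {0,…,k−1}. -/

import Mathlib

open Matrix Complex

noncomputable section

/-- The universal monic polynomial `P_s(z) = Σ_{h=0}^{k} (−1)^h s_h z^{k−h}` (with `s_0 = 1`),
where `s i` represents the `(i+1)`-st coefficient `s_{i+1}`. -/
def LP (k : ℕ) (s : Fin k → ℂ) (z : ℂ) : ℂ :=
  z ^ k + ∑ i : Fin k, (-1 : ℂ) ^ ((i : ℕ) + 1) * s i * z ^ (k - 1 - (i : ℕ))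

/-- The derivative `P'_s(z) = Σ_{h=0}^{k−1} (−1)^h (k−h) s_h z^{k−h−1}` (with `s_0 = 1`). -/
def LP' (k : ℕ) (s : Fin k → ℂ) (z : ℂ) : ℂ :=
  (k : ℂ) * z ^ (k - 1) +
    ∑ i : Fin k, (-1 : ℂ) ^ ((i : ℕ) + 1) * ((k - 1 - (i : ℕ) : ℕ) : ℂ) * s i *
      z ^ (k - 2 - (i : ℕ))

open Polynomial

def lisQ (k : ℕ) (s : Fin k → ℂ) : Polynomial ℂ :=
  X ^ k + ∑ i : Fin k, C ((-1 : ℂ) ^ ((i : ℕ) + 1) * s i) * X ^ (k - 1 - (i : ℕ))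

lemma eval_lisQ (k : ℕ) (s : Fin k → ℂ) (z : ℂ) : (lisQ k s).eval z = LP k s z := by
  simp [lisQ, LP, eval_finset_sum]

lemma eval_deriv_lisQ (k : ℕ) (hk : 2 ≤ k) (s : Fin k → ℂ) (z : ℂ) :
    ((lisQ k s).derivative).eval z = LP' k s z := by
  have h1 : ∀ i : Fin k, k - 1 - (i : ℕ) - 1 = k - 2 - (i : ℕ) := by omega
  simp only [lisQ, derivative_add, derivative_X_pow, derivative_sum, derivative_C_mul_X_pow,
    eval_add, eval_mul, eval_pow, eval_natCast, eval_C, eval_X, eval_finset_sum, LP']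
  congr 1
  refine Finset.sum_congr rfl fun i _ => ?_
  rw [h1 i]
  ring

lemma monic_lisQ (k : ℕ) (hk : 2 ≤ k) (s : Fin k → ℂ) : (lisQ k s).Monic := by
  apply monic_X_pow_add
  refine lt_of_le_of_lt (degree_sum_le _ _) ?_
  rw [Finset.sup_lt_iff (by exact_mod_cast WithBot.bot_lt_coe k)]
  intro i _
  refine lt_of_le_of_lt (degree_C_mul_X_pow_le _ _) ?_
  exact_mod_cast Nat.lt_of_le_of_lt (Nat.sub_le _ _) (by omega : k - 1 < k)

lemma natDegree_lisQ (k : ℕ) (hk : 2 ≤ k) (s : Fin k → ℂ) : (lisQ k s).natDegree = k := by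
  have h : ((lisQ k s)).degree = k := by
    unfold lisQ
    rw [degree_add_eq_left_of_degree_lt, degree_X_pow]
    rw [degree_X_pow]
    refine lt_of_le_of_lt (degree_sum_le _ _) ?_
    rw [Finset.sup_lt_iff (by exact_mod_cast WithBot.bot_lt_coe k)]
    intro i _
    refine lt_of_le_of_lt (degree_C_mul_X_pow_le _ _) ?_
    exact_mod_cast Nat.lt_of_le_of_lt (Nat.sub_le _ _) (by omega : k - 1 < k)
  exact natDegree_eq_of_degree_eq_some h

lemma card_roots_lisQ (k : ℕ) (hk : 2 ≤ k) (s : Fin k → ℂ) :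
    (lisQ k s).roots.card = k := by
  have := splits_iff_card_roots.mp (IsAlgClosed.splits (lisQ k s))
  rw [this, natDegree_lisQ k hk s]

lemma root_bound (k : ℕ) (hk : 2 ≤ k) (s : Fin k → ℂ) (z : ℂ)
    (hz : LP k s z = 0) : ‖z‖ ≤ max 1 (∑ i : Fin k, ‖s i‖) := by
  rcases le_or_gt (‖z‖) 1 with h | h
  · exact le_max_of_le_left h
  refine le_max_of_le_right ?_
  have hz' : z ^ k = -∑ i : Fin k, (-1 : ℂ) ^ ((i : ℕ) + 1) * s i * z ^ (k - 1 - (i : ℕ)) := by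
    rw [LP] at hz; linear_combination hz
  have habs : ‖z‖ ^ k ≤ (∑ i : Fin k, ‖s i‖) * ‖z‖ ^ (k - 1) := by
    calc ‖z‖ ^ k = ‖z ^ k‖ := by rw [norm_pow]
      _ ≤ ∑ i : Fin k, ‖(-1 : ℂ) ^ ((i : ℕ) + 1) * s i * z ^ (k - 1 - (i : ℕ))‖ := by
          rw [hz', norm_neg]
          exact norm_sum_le _ _
      _ ≤ ∑ i : Fin k, ‖s i‖ * ‖z‖ ^ (k - 1) := by
          refine Finset.sum_le_sum fun i _ => ?_
          have : ‖(-1 : ℂ) ^ ((i : ℕ) + 1) * s i * z ^ (k - 1 - (i : ℕ))‖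
              = ‖s i‖ * ‖z‖ ^ (k - 1 - (i : ℕ)) := by
            simp [AbsoluteValue.map_mul, map_pow]
          rw [this]
          exact mul_le_mul_of_nonneg_left
            (pow_le_pow_right₀ h.le (by omega)) (norm_nonneg _)
      _ = (∑ i : Fin k, ‖s i‖) * ‖z‖ ^ (k - 1) := by
          rw [Finset.sum_mul]
  have hpow : ‖z‖ ^ k = ‖z‖ ^ (k - 1) * ‖z‖ := by
    rw [← pow_succ]; congr 1; omega
  have hp : (0:ℝ) < ‖z‖ ^ (k - 1) := pow_pos (lt_trans one_pos h) _
  nlinarith [habs, hpow, hp]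

open Metric in
lemma eval_deriv_multiset_prod (M : Multiset ℂ) (z : ℂ)
    (hz : ((M.map fun a => X - C a).prod).eval z ≠ 0) :
    (((M.map fun a => X - C a).prod).derivative).eval z =
      ((M.map fun a => X - C a).prod).eval z * (M.map fun a => (z - a)⁻¹).sum := by
  induction M using Multiset.induction with
  | empty => simp
  | cons a M ih =>
    have hq : ((M.map fun a => X - C a).prod).eval z ≠ 0 := by
      intro h
      apply hz
      simp only [Multiset.map_cons, Multiset.prod_cons, eval_mul, h, mul_zero]
    have hza : z - a ≠ 0 := by
      intro h
      apply hz
      simp only [Multiset.map_cons, Multiset.prod_cons, eval_mul, eval_sub, eval_X, eval_C, h,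
        zero_mul]
    simp only [Multiset.map_cons, Multiset.prod_cons, derivative_mul, eval_add, eval_mul,
      eval_sub, eval_X, eval_C, derivative_sub, derivative_X, derivative_C, sub_zero, eval_one,
      Multiset.sum_cons, ih hq]
    field_simp
open Metric in
lemma circleIntegral_add' {f g : ℂ → ℂ} {c : ℂ} {R : ℝ} (hf : CircleIntegrable f c R)
    (hg : CircleIntegrable g c R) :
    (∮ z in C(c, R), (f z + g z)) = (∮ z in C(c, R), f z) + ∮ z in C(c, R), g z := by
  simp only [circleIntegral, smul_add]
  exact intervalIntegral.integral_add ((circleIntegrable_iff R).mp hf)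
    ((circleIntegrable_iff R).mp hg)

open Metric in
lemma continuousOn_msum (M : Multiset ℂ) {R : ℝ} (hM : ∀ a ∈ M, ‖a‖ < R) :
    ContinuousOn (fun ζ => (M.map fun a => (ζ - a)⁻¹).sum) (sphere (0:ℂ) R) := by
  induction M using Multiset.induction with
  | empty => simp [continuousOn_const]
  | cons a M ih =>
    simp only [Multiset.map_cons, Multiset.sum_cons]
    refine ContinuousOn.add ?_ (ih fun b hb => hM b (Multiset.mem_cons_of_mem hb))
    refine ContinuousOn.inv₀ (by fun_prop) fun ζ hζ => sub_ne_zero.mpr ?_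
    intro h
    rw [mem_sphere_zero_iff_norm, h] at hζ
    exact absurd hζ (ne_of_lt (hM a (Multiset.mem_cons_self a M)))

open Metric in
lemma circle_sum_integral (g : ℂ → ℂ) (hg : Differentiable ℂ g) {R : ℝ} (hR : 0 < R)
    (M : Multiset ℂ) (hM : ∀ a ∈ M, ‖a‖ < R) :
    (∮ ζ in C(0, R), g ζ * (M.map fun a => (ζ - a)⁻¹).sum) =
      (2 * Real.pi * I) * (M.map g).sum := by
  induction M using Multiset.induction with
  | empty => simp [circleIntegral]
  | cons a M ih =>
    have hM' : ∀ b ∈ M, ‖b‖ < R := fun b hb => hM b (Multiset.mem_cons_of_mem hb)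
    have haR : ‖a‖ < R := hM a (Multiset.mem_cons_self a M)
    have h1 : CircleIntegrable (fun ζ => g ζ * (ζ - a)⁻¹) 0 R := by
      refine ContinuousOn.circleIntegrable hR.le ?_
      refine (hg.continuous.continuousOn).mul ?_
      exact (continuousOn_msum ({a} : Multiset ℂ) (by simpa using haR)).congr
        (fun ζ _ => by simp)
    have h2 : CircleIntegrable (fun ζ => g ζ * (M.map fun b => (ζ - b)⁻¹).sum) 0 R := by
      refine ContinuousOn.circleIntegrable hR.le ?_
      exact (hg.continuous.continuousOn).mul (continuousOn_msum M hM')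
    have key : (fun ζ => g ζ * ((Multiset.map (fun b => (ζ - b)⁻¹) (a ::ₘ M)).sum)) =
        fun ζ => g ζ * (ζ - a)⁻¹ + g ζ * (M.map fun b => (ζ - b)⁻¹).sum := by
      funext ζ
      simp only [Multiset.map_cons, Multiset.sum_cons]
      ring
    rw [key, circleIntegral_add' h1 h2, ih hM']
    have hc : (fun ζ => g ζ * (ζ - a)⁻¹) = fun ζ => (ζ - a)⁻¹ • g ζ := by
      funext ζ; simp [mul_comm]
    rw [hc, DiffContOnCl.circleIntegral_sub_inv_smul (hg.diffContOnCl)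
      (by rwa [mem_ball_zero_iff])]
    simp only [Multiset.map_cons, Multiset.sum_cons, smul_eq_mul]
    ring
open Metric in
lemma psi_eq_integral (k : ℕ) (hk : 2 ≤ k) (f : ℂ → ℂ) (hf : Differentiable ℂ f)
    (s : Fin k → ℂ) (R : ℝ) (hR : 0 < R)
    (hroots : ∀ z : ℂ, LP k s z = 0 → ‖z‖ < R) (h : ℕ) :
    ((lisQ k s).roots.map (fun a => a ^ h * f a)).sum =
      (2 * Real.pi * Complex.I)⁻¹ * ∮ ζ in C(0, R), f ζ * ζ ^ h * LP' k s ζ / LP k s ζ := by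
  set M := (lisQ k s).roots with hM
  have hQne : lisQ k s ≠ 0 := (monic_lisQ k hk s).ne_zero
  have hmem : ∀ a ∈ M, LP k s a = 0 := by
    intro a ha
    rw [hM, mem_roots hQne] at ha
    rw [← eval_lisQ]; exact ha
  have hMlt : ∀ a ∈ M, ‖a‖ < R := fun a ha => hroots a (hmem a ha)
  have hprod : lisQ k s = (M.map fun a => X - C a).prod :=
    (IsAlgClosed.splits _).eq_prod_roots_of_monic (monic_lisQ k hk s)
  have hne : ∀ ζ ∈ sphere (0:ℂ) R, LP k s ζ ≠ 0 := by
    intro ζ hζ hzero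
    rw [mem_sphere_zero_iff_norm] at hζ
    exact absurd hζ (ne_of_lt (hroots ζ hzero))
  have heq : Set.EqOn (fun ζ => f ζ * ζ ^ h * LP' k s ζ / LP k s ζ)
      (fun ζ => (f ζ * ζ ^ h) * (M.map fun a => (ζ - a)⁻¹).sum) (sphere (0:ℂ) R) := by
    intro ζ hζ
    have h1 : LP' k s ζ = LP k s ζ * (M.map fun a => (ζ - a)⁻¹).sum := by
      rw [← eval_deriv_lisQ k hk, ← eval_lisQ, hprod]
      exact eval_deriv_multiset_prod M ζ (by rw [← hprod, eval_lisQ]; exact hne ζ hζ)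
    simp only [h1]
    field_simp [hne ζ hζ]
  rw [circleIntegral.integral_congr hR.le heq,
    circle_sum_integral (fun ζ => f ζ * ζ ^ h) (hf.mul (differentiable_pow h)) hR M hMlt,
    ← mul_assoc, inv_mul_cancel₀ (by simp [Real.pi_ne_zero, Complex.I_ne_zero,
      Complex.ext_iff] : (2 * Real.pi * Complex.I) ≠ 0), one_mul]
  congr 1
  exact Multiset.map_congr rfl fun a _ => by ring
lemma roots_eq_of_inj (k : ℕ) (hk : 2 ≤ k) (s : Fin k → ℂ) (z : Fin k → ℂ)
    (hinj : Function.Injective z) (hz : ∀ j : Fin k, LP k s (z j) = 0) :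
    (lisQ k s).roots = Finset.univ.val.map z := by
  have hQne : lisQ k s ≠ 0 := (monic_lisQ k hk s).ne_zero
  have hzM : ∀ j, z j ∈ (lisQ k s).roots := by
    intro j
    rw [mem_roots hQne]
    rw [IsRoot, eval_lisQ]; exact hz j
  have hnodup : (Finset.univ.val.map z).Nodup :=
    Finset.univ.nodup.map hinj
  have hle : Finset.univ.val.map z ≤ (lisQ k s).roots := by
    rw [Multiset.le_iff_count]
    intro a
    by_cases ha : a ∈ Finset.univ.val.map z
    · obtain ⟨j, _, rfl⟩ := Multiset.mem_map.mp ha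
      calc Multiset.count (z j) (Finset.univ.val.map z) ≤ 1 :=
            Multiset.nodup_iff_count_le_one.mp hnodup _
        _ ≤ Multiset.count (z j) (lisQ k s).roots :=
            Multiset.one_le_count_iff_mem.mpr (hzM j)
    · rw [Multiset.count_eq_zero_of_notMem ha]
      exact Nat.zero_le _
  refine (Multiset.eq_of_le_of_card_le hle ?_).symm
  rw [Multiset.card_map, card_roots_lisQ k hk s]
  simp

lemma psi_eq_sum_of_inj (k : ℕ) (hk : 2 ≤ k) (f : ℂ → ℂ)
    (s : Fin k → ℂ) (z : Fin k → ℂ) (hinj : Function.Injective z)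
    (hz : ∀ j : Fin k, LP k s (z j) = 0) (h : ℕ) :
    ((lisQ k s).roots.map (fun a => a ^ h * f a)).sum = ∑ j : Fin k, (z j) ^ h * f (z j) := by
  rw [roots_eq_of_inj k hk s z hinj hz, Multiset.map_map]
  rfl
def lisLd (k : ℕ) (ζ : ℂ) : (Fin k → ℂ) →L[ℂ] ℂ :=
  ∑ i : Fin k, ((-1 : ℂ) ^ ((i : ℕ) + 1) * ζ ^ (k - 1 - (i : ℕ))) •
    (ContinuousLinearMap.proj i : (Fin k → ℂ) →L[ℂ] ℂ)

def lisLn (k : ℕ) (ζ : ℂ) : (Fin k → ℂ) →L[ℂ] ℂ :=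
  ∑ i : Fin k, ((-1 : ℂ) ^ ((i : ℕ) + 1) * ((k - 1 - (i : ℕ) : ℕ) : ℂ) * ζ ^ (k - 2 - (i : ℕ))) •
    (ContinuousLinearMap.proj i : (Fin k → ℂ) →L[ℂ] ℂ)

lemma lisLd_apply (k : ℕ) (ζ : ℂ) (s : Fin k → ℂ) :
    lisLd k ζ s = ∑ i : Fin k, (-1 : ℂ) ^ ((i : ℕ) + 1) * ζ ^ (k - 1 - (i : ℕ)) * s i := by
  simp [lisLd, ContinuousLinearMap.sum_apply, mul_comm]

lemma lisLn_apply (k : ℕ) (ζ : ℂ) (s : Fin k → ℂ) :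
    lisLn k ζ s = ∑ i : Fin k,
      (-1 : ℂ) ^ ((i : ℕ) + 1) * ((k - 1 - (i : ℕ) : ℕ) : ℂ) * ζ ^ (k - 2 - (i : ℕ)) * s i := by
  simp [lisLn, ContinuousLinearMap.sum_apply, mul_comm]

lemma hasFDerivAt_LP (k : ℕ) (ζ : ℂ) (s : Fin k → ℂ) :
    HasFDerivAt (fun s : Fin k → ℂ => LP k s ζ) (lisLd k ζ) s := by
  have hfun : (fun s : Fin k → ℂ => LP k s ζ) = fun s => ζ ^ k + lisLd k ζ s := by
    funext s
    rw [LP, lisLd_apply]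
    congr 1
    exact Finset.sum_congr rfl fun i _ => by ring
  rw [hfun]
  exact (lisLd k ζ).hasFDerivAt.const_add _

lemma hasFDerivAt_LP' (k : ℕ) (ζ : ℂ) (s : Fin k → ℂ) :
    HasFDerivAt (fun s : Fin k → ℂ => LP' k s ζ) (lisLn k ζ) s := by
  have hfun : (fun s : Fin k → ℂ => LP' k s ζ) = fun s => (k : ℂ) * ζ ^ (k - 1) + lisLn k ζ s := by
    funext s
    rw [LP', lisLn_apply]
    congr 1
    exact Finset.sum_congr rfl fun i _ => by ring
  rw [hfun]
  exact (lisLn k ζ).hasFDerivAt.const_add _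

lemma continuous_lisLd (k : ℕ) : Continuous (lisLd k) :=
  continuous_finset_sum _ fun i _ => (by fun_prop :
    Continuous fun ζ : ℂ => (-1 : ℂ) ^ ((i : ℕ) + 1) * ζ ^ (k - 1 - (i : ℕ))).smul continuous_const

lemma continuous_lisLn (k : ℕ) : Continuous (lisLn k) :=
  continuous_finset_sum _ fun i _ => (by fun_prop :
    Continuous fun ζ : ℂ => (-1 : ℂ) ^ ((i : ℕ) + 1) * ((k - 1 - (i : ℕ) : ℕ) : ℂ) *
      ζ ^ (k - 2 - (i : ℕ))).smul continuous_const

lemma continuous_LP2 (k : ℕ) : Continuous (fun p : (Fin k → ℂ) × ℂ => LP k p.1 p.2) := by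
  unfold LP
  fun_prop

lemma continuous_LP'2 (k : ℕ) : Continuous (fun p : (Fin k → ℂ) × ℂ => LP' k p.1 p.2) := by
  unfold LP'
  fun_prop

def lisFd (k h : ℕ) (f : ℂ → ℂ) (s : Fin k → ℂ) (ζ : ℂ) : (Fin k → ℂ) →L[ℂ] ℂ :=
  (ζ * I) • ((f ζ * ζ ^ h * LP' k s ζ) • ((-(LP k s ζ ^ 2)⁻¹) • lisLd k ζ) +
    (LP k s ζ)⁻¹ • ((f ζ * ζ ^ h) • lisLn k ζ))

lemma hasFDerivAt_lisF (k h : ℕ) (f : ℂ → ℂ) (s : Fin k → ℂ) (ζ : ℂ)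
    (hζ : LP k s ζ ≠ 0) :
    HasFDerivAt (fun s : Fin k → ℂ => (ζ * I) * (f ζ * ζ ^ h * LP' k s ζ / LP k s ζ))
      (lisFd k h f s ζ) s := by
  have hn : HasFDerivAt (fun s : Fin k → ℂ => f ζ * ζ ^ h * LP' k s ζ)
      ((f ζ * ζ ^ h) • lisLn k ζ) s := (hasFDerivAt_LP' k ζ s).const_mul _
  have hinv : HasFDerivAt (fun s : Fin k → ℂ => (LP k s ζ)⁻¹)
      ((-(LP k s ζ ^ 2)⁻¹) • lisLd k ζ) s :=
    (hasDerivAt_inv hζ).comp_hasFDerivAt s (hasFDerivAt_LP k ζ s)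
  have hmul := hn.mul hinv
  have hfun : (fun s : Fin k → ℂ => (ζ * I) * (f ζ * ζ ^ h * LP' k s ζ / LP k s ζ)) =
      fun s : Fin k → ℂ => (ζ * I) * (f ζ * ζ ^ h * LP' k s ζ * (LP k s ζ)⁻¹) := by
    funext s; rw [div_eq_mul_inv]
  rw [hfun, lisFd]
  exact hmul.const_mul _
set_option maxHeartbeats 2000000 in
open Metric MeasureTheory in
lemma differentiableAt_psi (k : ℕ) (hk : 2 ≤ k) (f : ℂ → ℂ) (hf : Differentiable ℂ f)
    (h : ℕ) (s₀ : Fin k → ℂ) :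
    DifferentiableAt ℂ (fun s => ((lisQ k s).roots.map (fun a => a ^ h * f a)).sum) s₀ := by
  set B : ℝ := max 1 (∑ i : Fin k, ‖s₀ i‖) with hB
  set R : ℝ := B + 1 with hRdef
  have hB1 : (1:ℝ) ≤ B := le_max_left _ _
  have hR : 0 < R := by positivity
  set ε : ℝ := 1 / (k + 1) with hε
  have hε_pos : 0 < ε := by positivity
  -- roots of LP s are < R for s in the closed ball
  have hA : ∀ s ∈ closedBall s₀ ε, ∀ z : ℂ, LP k s z = 0 → ‖z‖ < R := by
    intro s hs z hz
    refine lt_of_le_of_lt (root_bound k hk s z hz) ?_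
    have hsum : ∑ i : Fin k, ‖s i‖ ≤ (∑ i : Fin k, ‖s₀ i‖) + k * ε := by
      have : ∀ i : Fin k, ‖s i‖ ≤ ‖s₀ i‖ + ε := by
        intro i
        have h1 : ‖s i - s₀ i‖ ≤ ε := by
          have := norm_le_pi_norm (s - s₀) i
          rw [mem_closedBall, dist_eq_norm] at hs
          simpa using this.trans hs
        calc ‖s i‖ ≤ ‖s₀ i‖ + ‖s i - s₀ i‖ := by
              simpa using norm_add_le (s₀ i) (s i - s₀ i)
          _ ≤ ‖s₀ i‖ + ε := by linarith
      calc ∑ i : Fin k, ‖s i‖ ≤ ∑ i : Fin k, (‖s₀ i‖ + ε) :=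
            Finset.sum_le_sum fun i _ => this i
        _ = (∑ i : Fin k, ‖s₀ i‖) + k * ε := by
            rw [Finset.sum_add_distrib]; simp [mul_comm]
    have hkε : (k:ℝ) * ε < 1 := by
      rw [hε]
      rw [mul_one_div, div_lt_one (by positivity)]
      linarith
    have hkε0 : (0:ℝ) ≤ k * ε := by positivity
    have : max 1 (∑ i : Fin k, ‖s i‖) ≤ B + k * ε := by
      refine max_le (by linarith) ?_
      refine hsum.trans ?_
      have : (∑ i : Fin k, ‖s₀ i‖) ≤ B := le_max_right _ _
      linarith
    linarith
  have hBne : ∀ s ∈ closedBall s₀ ε, ∀ ζ : ℂ, ‖ζ‖ = R → LP k s ζ ≠ 0 := by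
    intro s hs ζ hζ h0
    exact absurd hζ (ne_of_lt (hA s hs ζ h0))
  have hBsphere : ∀ s ∈ closedBall s₀ ε, ∀ ζ ∈ sphere (0:ℂ) R, LP k s ζ ≠ 0 := by
    intro s hs ζ hζ
    rw [mem_sphere_zero_iff_norm] at hζ
    exact hBne s hs ζ hζ
  -- the parametric integrand
  set F : (Fin k → ℂ) → ℝ → ℂ := fun s θ =>
    (circleMap 0 R θ * I) * (f (circleMap 0 R θ) * (circleMap 0 R θ) ^ h *
      LP' k s (circleMap 0 R θ) / LP k s (circleMap 0 R θ)) with hF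
  set μ : Measure ℝ := volume.restrict (Set.Ioc (0:ℝ) (2 * Real.pi)) with hμ
  have hcm_mem : ∀ θ : ℝ, circleMap 0 R θ ∈ sphere (0:ℂ) R :=
    fun θ => circleMap_mem_sphere _ hR.le θ
  -- the equality of Ψ with the parametric integral, on the closed ball
  have hΨ_eq : ∀ s ∈ closedBall s₀ ε,
      ((lisQ k s).roots.map (fun a => a ^ h * f a)).sum =
        (2 * Real.pi * I)⁻¹ * ∫ θ, F s θ ∂μ := by
    intro s hs
    rw [psi_eq_integral k hk f hf s R hR (hA s hs) h]
    congr 1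
    rw [circleIntegral]
    rw [intervalIntegral.integral_of_le Real.two_pi_pos.le]
    refine integral_congr_ae (Filter.Eventually.of_forall fun θ => ?_)
    simp only [hF, deriv_circleMap, smul_eq_mul]
  -- joint continuity and bound of the derivative
  set K : Set ((Fin k → ℂ) × ℂ) := closedBall s₀ ε ×ˢ sphere (0:ℂ) R with hK
  have hKcomp : IsCompact K := (isCompact_closedBall _ _).prod (isCompact_sphere _ _)
  have hGcont : ContinuousOn (fun p : (Fin k → ℂ) × ℂ => lisFd k h f p.1 p.2) K := by
    have hLPne : ∀ p ∈ K, LP k p.1 p.2 ≠ 0 := fun p hp => hBsphere p.1 hp.1 p.2 hp.2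
    have c1 : ContinuousOn (fun p : (Fin k → ℂ) × ℂ => p.2 * I) K := by fun_prop
    have c2 : ContinuousOn (fun p : (Fin k → ℂ) × ℂ => f p.2 * p.2 ^ h * LP' k p.1 p.2) K :=
      (((hf.continuous.comp continuous_snd).mul (continuous_snd.pow h)).mul
        (continuous_LP'2 k)).continuousOn
    have c3 : ContinuousOn (fun p : (Fin k → ℂ) × ℂ => -(LP k p.1 p.2 ^ 2)⁻¹) K := by
      refine ContinuousOn.neg (ContinuousOn.inv₀ (((continuous_LP2 k).pow 2).continuousOn) ?_)
      exact fun p hp => pow_ne_zero _ (hLPne p hp)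
    have c4 : ContinuousOn (fun p : (Fin k → ℂ) × ℂ => lisLd k p.2) K :=
      ((continuous_lisLd k).comp continuous_snd).continuousOn
    have c5 : ContinuousOn (fun p : (Fin k → ℂ) × ℂ => lisLn k p.2) K :=
      ((continuous_lisLn k).comp continuous_snd).continuousOn
    have c6 : ContinuousOn (fun p : (Fin k → ℂ) × ℂ => (LP k p.1 p.2)⁻¹) K :=
      ContinuousOn.inv₀ ((continuous_LP2 k).continuousOn) hLPne
    have c2a : ContinuousOn (fun p : (Fin k → ℂ) × ℂ => f p.2 * p.2 ^ h) K :=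
      ((hf.continuous.comp continuous_snd).mul (continuous_snd.pow h)).continuousOn
    exact c1.smul ((c2.smul (c3.smul c4)).add (c6.smul (c2a.smul c5)))
  obtain ⟨C, hC⟩ := hKcomp.exists_bound_of_continuousOn hGcont
  have hLPcont : ∀ s : Fin k → ℂ, Continuous (fun θ : ℝ => LP k s (circleMap 0 R θ)) :=
    fun s => (continuous_LP2 k).comp (continuous_const.prodMk (continuous_circleMap 0 R))
  have hLP'cont : ∀ s : Fin k → ℂ, Continuous (fun θ : ℝ => LP' k s (circleMap 0 R θ)) :=
    fun s => (continuous_LP'2 k).comp (continuous_const.prodMk (continuous_circleMap 0 R))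
  have hFcont : ∀ s ∈ closedBall s₀ ε, Continuous (F s) := by
    intro s hs
    refine Continuous.mul (by fun_prop) ?_
    refine Continuous.div ?_ (hLPcont s) (fun θ => hBsphere s hs _ (hcm_mem θ))
    exact ((hf.continuous.comp (continuous_circleMap 0 R)).mul
      ((continuous_circleMap 0 R).pow h)).mul (hLP'cont s)
  have key : HasFDerivAt (fun s => ∫ θ, F s θ ∂μ)
      (∫ θ, lisFd k h f s₀ (circleMap 0 R θ) ∂μ) s₀ := by
    refine hasFDerivAt_integral_of_dominated_of_fderiv_le
      (F' := fun s θ => lisFd k h f s (circleMap 0 R θ)) (bound := fun _ => C) (ball_mem_nhds s₀ hε_pos)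
      ?_ ?_ ?_ ?_ ?_ ?_
    · exact Filter.eventually_of_mem (closedBall_mem_nhds s₀ hε_pos)
        fun s hs => (hFcont s hs).aestronglyMeasurable
    · exact (hFcont s₀ (mem_closedBall_self hε_pos.le)).integrableOn_Ioc
    · refine Continuous.aestronglyMeasurable ?_
      exact hGcont.comp_continuous (continuous_const.prodMk (continuous_circleMap 0 R))
        (fun θ => ⟨mem_closedBall_self hε_pos.le, hcm_mem θ⟩)
    · exact Filter.Eventually.of_forall fun θ s hs =>
        hC (s, circleMap 0 R θ) ⟨ball_subset_closedBall hs, hcm_mem θ⟩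
    · rw [hμ]
      exact integrableOn_const measure_Ioc_lt_top.ne
    · refine Filter.Eventually.of_forall fun θ s hs => ?_
      have := hasFDerivAt_lisF k h f s (circleMap 0 R θ)
        (hBsphere s (ball_subset_closedBall hs) _ (hcm_mem θ))
      simpa only [hF] using this
  have hdiff2 : DifferentiableAt ℂ (fun s => (2 * Real.pi * I)⁻¹ * ∫ θ, F s θ ∂μ) s₀ :=
    (key.differentiableAt).const_mul _
  refine hdiff2.congr_of_eventuallyEq ?_
  exact Filter.eventually_of_mem (closedBall_mem_nhds s₀ hε_pos) fun s hs => hΨ_eq s hs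

/-- `Ψ_f` is a well-defined (independent of the admissible radius `R`)
vector-valued holomorphic function on `ℂ^k`, and where `P_s` has `k` pairwise distinct roots
`z_1, …, z_k` its `h`-th component is `ψ_h(s) = Σ_j z_j^h f(z_j)`. -/
theorem lisbon_Psi_well_defined_holomorphic_and_sum_over_roots
    (k : ℕ) (hk : 2 ≤ k) (f : ℂ → ℂ) (hf : Differentiable ℂ f) :
    ∃ Ψ : (Fin k → ℂ) → Fin k → ℂ, Differentiable ℂ Ψ ∧
      (∀ (s : Fin k → ℂ) (R : ℝ), 0 < R →
        (∀ z : ℂ, LP k s z = 0 → ‖z‖ < R) →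
        ∀ h : Fin k,
          Ψ s h = (2 * Real.pi * Complex.I)⁻¹ *
            ∮ ζ in C(0, R), f ζ * ζ ^ (h : ℕ) * LP' k s ζ / LP k s ζ) ∧
      (∀ (s : Fin k → ℂ) (z : Fin k → ℂ), Function.Injective z →
        (∀ j : Fin k, LP k s (z j) = 0) →
        ∀ h : Fin k, Ψ s h = ∑ j : Fin k, (z j) ^ (h : ℕ) * f (z j)) := by
  refine ⟨fun s h => ((lisQ k s).roots.map (fun a => a ^ (h : ℕ) * f a)).sum, ?_, ?_, ?_⟩
  · rw [differentiable_pi]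
    exact fun h s₀ => differentiableAt_psi k hk f hf (h : ℕ) s₀
  · exact fun s R hR hroots h => psi_eq_integral k hk f hf s R hR hroots (h : ℕ)
  · exact fun s z hinj hz h => psi_eq_sum_of_inj k hk f s z hinj hz (h : ℕ)
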